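/- arXiv:2303.01087 — 4 statements merged into one kernel-verified Lean document; each statement's English description precedes it below -/
import Mathlib

section
/- For every h in H^{1/2}_+(𝕋) and u in L^2_+(𝕋), the Toeplitz operator satisfies ‖T_ū h‖_{L²}² ≤ (⟨Dh, h⟩ + ‖h‖_{L²}²) · ‖u‖_{L²}², where D = −i∂_x. -/
open scoped BigOperators
open Filter

noncomputable section

/-!  Fourier–coefficient model of the circle `𝕋 = ℝ/2πℤ`.

A function `u ∈ L²₊(𝕋)` (Hardy space) is identified with its sequence of
Fourier coefficients `u : ℕ → ℂ`, `u n = û(n)`; a general function on the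
circle is identified with `f : ℤ → ℂ`.  The inner product is
`⟨u,v⟩ = (1/2π)∫ u v̄ = Σ û(n) conj(v̂(n))`. -/

/-- Inner product `⟨u,v⟩ = Σₙ û(n) conj(v̂(n))` on the Hardy space. -/
def hinner (u v : ℕ → ℂ) : ℂ := ∑' n : ℕ, u n * (starRingEnd ℂ) (v n)

/-- Squared `L²` norm. -/
def l2sq (u : ℕ → ℂ) : ℝ := ∑' n : ℕ, ‖u n‖ ^ 2

/-- Membership in the Hardy space `L²₊(𝕋)`. -/
def MemL2 (u : ℕ → ℂ) : Prop := Summable fun n : ℕ => ‖u n‖ ^ 2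

/-- Membership in the Hardy–Sobolev space `H^s₊(𝕋)`. -/
def MemHs (s : ℝ) (u : ℕ → ℂ) : Prop :=
  Summable fun n : ℕ => (1 + (n : ℝ) ^ 2) ^ s * ‖u n‖ ^ 2

/-- The quadratic form `⟨Dh, h⟩ = Σ k |ĥ(k)|²` of `D = -i∂ₓ`. -/
def dform (h : ℕ → ℂ) : ℝ := ∑' k : ℕ, (k : ℝ) * ‖h k‖ ^ 2

/-- Toeplitz operator with anti-analytic symbol `ū`:
`(T_ū h)(n) = (Π(ū h))^(n) = Σ_p ĥ(n+p) conj(û(p))`. -/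
def Tbar (u h : ℕ → ℂ) : ℕ → ℂ :=
  fun n => ∑' p : ℕ, h (n + p) * (starRingEnd ℂ) (u p)

/-- Toeplitz operator with analytic symbol `u`:
`(T_u h)(n) = (Π(u h))^(n) = Σ_{k ≤ n} û(n-k) ĥ(k)`. -/
def Tan (u h : ℕ → ℂ) : ℕ → ℂ :=
  fun n => ∑ k ∈ Finset.range (n + 1), u (n - k) * h k

/-- `D = -i ∂ₓ` in Fourier coefficients. -/
def Dop (h : ℕ → ℂ) : ℕ → ℂ := fun n => (n : ℂ) * h n

/-- `∂ₓ` in Fourier coefficients. -/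
def dx (u : ℕ → ℂ) : ℕ → ℂ := fun n => Complex.I * (n : ℂ) * u n

/-- The Lax operator `L_u = D - T_u T_ū`. -/
def Lop (u h : ℕ → ℂ) : ℕ → ℂ := fun n => Dop h n - Tan u (Tbar u h) n

/-- The operator `B_u = T_u T_{∂ₓū} - T_{∂ₓu} T_ū + i (T_u T_ū)²`. -/
def Bop (u h : ℕ → ℂ) : ℕ → ℂ := fun n =>
  Tan u (Tbar (dx u) h) n - Tan (dx u) (Tbar u h) n
    + Complex.I * Tan u (Tbar u (Tan u (Tbar u h))) n

/-- The shift operator `S : h ↦ e^{ix} h`. -/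
def S (h : ℕ → ℂ) : ℕ → ℂ := fun n => if n = 0 then 0 else h (n - 1)

/-- The adjoint shift `S* = T_{e^{-ix}}`. -/
def Sstar (h : ℕ → ℂ) : ℕ → ℂ := fun n => h (n + 1)

/-- The constant function `1`. -/
def one : ℕ → ℂ := fun n => if n = 0 then 1 else 0

/- general functions on the circle, via two-sided Fourier coefficients -/

/-- Fourier coefficients of the complex conjugate: `(f̄)^(n) = conj (f̂(-n))`. -/
def conjZ (a : ℤ → ℂ) : ℤ → ℂ := fun n => (starRingEnd ℂ) (a (-n))

/-- A Hardy-space function viewed as a function on the circle. -/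
def extZ (u : ℕ → ℂ) : ℤ → ℂ := fun n => if 0 ≤ n then u n.toNat else 0

/-- Fourier coefficients of a pointwise product (convolution). -/
def mulZ (a b : ℤ → ℂ) : ℤ → ℂ := fun n => ∑' m : ℤ, a m * b (n - m)

/-- `∂ₓ` in two-sided Fourier coefficients. -/
def dxZ (a : ℤ → ℂ) : ℤ → ℂ := fun n => Complex.I * (n : ℂ) * a n

/-- The Szegő projector `Π`, keeping only nonnegative modes. -/
def PiProj (a : ℤ → ℂ) : ℤ → ℂ := fun n => if 0 ≤ n then a n else 0

/-- The Szegő projector with values in the Hardy space. -/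
def PiZ (a : ℤ → ℂ) : ℕ → ℂ := fun n => a (n : ℤ)

/-- Membership in `L²(𝕋)`. -/
def MemL2Z (a : ℤ → ℂ) : Prop := Summable fun n : ℤ => ‖a n‖ ^ 2

/-- Fourier coefficient of the nonlinearity `D Π(|u|²) · u`
(note `Π(|u|²)^(k) = Σ_p û(k+p) conj(û(p)) = (T_ū u)(k)`). -/
def NLcoeff (u : ℕ → ℂ) : ℕ → ℂ :=
  fun n => ∑ k ∈ Finset.range (n + 1), (k : ℂ) * Tbar u u k * u (n - k)

/-- `u : ℝ → (ℕ → ℂ)` is an `H^s`-solution of the focusing Calogero–Sutherland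
DNLS equation `i∂ₜu + ∂ₓ²u + 2DΠ(|u|²)u = 0` on `[-T,T]`, in Fourier
coefficients: `∂ₜ û(n) = i(-n² û(n) + 2 (DΠ(|u|²)u)^(n))`. -/
def SolvesCS (s : ℝ) (T : ℝ) (u : ℝ → ℕ → ℂ) : Prop :=
  (∀ t ∈ Set.Icc (-T) T, MemHs s (u t)) ∧
  (∀ n : ℕ, ContinuousOn (fun t => u t n) (Set.Icc (-T) T)) ∧
  ∀ t ∈ Set.Icc (-T) T, ∀ n : ℕ,
    HasDerivAt (fun τ => u τ n)
      (Complex.I * (-(n : ℂ) ^ 2 * u t n + 2 * NLcoeff (u t) n)) t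



/-- Cauchy–Schwarz for infinite sums of nonnegative reals. -/
lemma cs_tsum (f g : ℕ → ℝ) (hf0 : ∀ n, 0 ≤ f n) (hg0 : ∀ n, 0 ≤ g n)
    (hf : Summable fun n => f n ^ 2) (hg : Summable fun n => g n ^ 2) :
    Summable (fun n => f n * g n) ∧
      (∑' n, f n * g n) ^ 2 ≤ (∑' n, f n ^ 2) * (∑' n, g n ^ 2) := by
  have hsum : Summable (fun n => f n * g n) := by
    apply Summable.of_nonneg_of_le (fun n => mul_nonneg (hf0 n) (hg0 n))
      (fun n => ?_) ((hf.add hg).div_const 2)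
    nlinarith [sq_nonneg (f n - g n)]
  refine ⟨hsum, ?_⟩
  set A := ∑' n, f n ^ 2 with hA
  set B := ∑' n, g n ^ 2 with hB
  have hA0 : 0 ≤ A := tsum_nonneg fun n => sq_nonneg _
  have hB0 : 0 ≤ B := tsum_nonneg fun n => sq_nonneg _
  have hle : (∑' n, f n * g n) ≤ Real.sqrt A * Real.sqrt B := by
    apply Summable.tsum_le_of_sum_le hsum
    intro s
    have h1 : (∑ i ∈ s, f i * g i) ^ 2 ≤ (∑ i ∈ s, f i ^ 2) * ∑ i ∈ s, g i ^ 2 :=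
      Finset.sum_mul_sq_le_sq_mul_sq s f g
    have h2 : (∑ i ∈ s, f i ^ 2) ≤ A := Summable.sum_le_tsum s (fun i _ => sq_nonneg _) hf
    have h3 : (∑ i ∈ s, g i ^ 2) ≤ B := Summable.sum_le_tsum s (fun i _ => sq_nonneg _) hg
    have h4 : (∑ i ∈ s, f i * g i) ^ 2 ≤ A * B := by
      calc (∑ i ∈ s, f i * g i) ^ 2 ≤ (∑ i ∈ s, f i ^ 2) * ∑ i ∈ s, g i ^ 2 := h1
        _ ≤ A * B := by
            apply mul_le_mul h2 h3 (Finset.sum_nonneg fun i _ => sq_nonneg _)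
            exact hA0
    have h5 : Real.sqrt ((∑ i ∈ s, f i * g i) ^ 2) ≤ Real.sqrt (A * B) :=
      Real.sqrt_le_sqrt h4
    rwa [Real.sqrt_sq (Finset.sum_nonneg fun i _ => mul_nonneg (hf0 i) (hg0 i)),
      Real.sqrt_mul hA0] at h5
  have hT0 : 0 ≤ ∑' n, f n * g n := tsum_nonneg fun n => mul_nonneg (hf0 n) (hg0 n)
  calc (∑' n, f n * g n) ^ 2 ≤ (Real.sqrt A * Real.sqrt B) ^ 2 := by
        apply pow_le_pow_left₀ hT0 hle
    _ = A * B := by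
        rw [mul_pow, Real.sq_sqrt hA0, Real.sq_sqrt hB0]

/-- The reindexing `(k, i) ↦ (i, k - i)` of `ℕ × ℕ`. -/
def sigmaEquiv : (Σ k : ℕ, Fin (k + 1)) ≃ ℕ × ℕ where
  toFun x := (x.2.1, x.1 - x.2.1)
  invFun q := ⟨q.1 + q.2, ⟨q.1, by omega⟩⟩
  left_inv := by
    rintro ⟨k, ⟨i, hi⟩⟩
    have h1 : i + (k - i) = k := by omega
    refine Sigma.ext h1 ?_
    rw [Fin.heq_ext_iff (congrArg (· + 1) h1)]
  right_inv := by rintro ⟨n, p⟩; simp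

/-- For `h ∈ H^{1/2}₊(𝕋)`, `u ∈ L²₊(𝕋)`,
`‖T_ū h‖² ≤ (⟨Dh,h⟩ + ‖h‖²) ‖u‖²`. -/
theorem toeplitz_sharp_bound (u h : ℕ → ℂ) (hu : MemL2 u) (hh : MemHs (1/2) h) :
    l2sq (Tbar u h) ≤ (dform h + l2sq h) * l2sq u := by
  -- notation
  set f : ℕ → ℝ := fun k => ‖h k‖ ^ 2 with hf_def
  have hf0 : ∀ k, 0 ≤ f k := fun k => sq_nonneg _
  -- summability of (k+1) * f k
  have hbound : ∀ n : ℕ, ((n : ℝ) + 1) * f n ≤ 2 * ((1 + (n : ℝ) ^ 2) ^ (1/2 : ℝ) * f n) := by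
    intro n
    rw [← Real.sqrt_eq_rpow]
    have h1 : ((n : ℝ) + 1) ≤ 2 * Real.sqrt (1 + (n : ℝ) ^ 2) := by
      have h2 : Real.sqrt (((n : ℝ) + 1) ^ 2) ≤ Real.sqrt (4 * (1 + (n : ℝ) ^ 2)) := by
        apply Real.sqrt_le_sqrt; nlinarith [sq_nonneg ((n : ℝ) - 1)]
      rw [Real.sqrt_sq (by positivity)] at h2
      calc ((n : ℝ) + 1) ≤ Real.sqrt (4 * (1 + (n : ℝ) ^ 2)) := h2
        _ = 2 * Real.sqrt (1 + (n : ℝ) ^ 2) := by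
            rw [show (4 : ℝ) * (1 + (n : ℝ) ^ 2) = 2 ^ 2 * (1 + (n : ℝ) ^ 2) by ring,
              Real.sqrt_mul (by positivity), Real.sqrt_sq (by norm_num)]
    calc ((n : ℝ) + 1) * f n ≤ (2 * Real.sqrt (1 + (n : ℝ) ^ 2)) * f n :=
          mul_le_mul_of_nonneg_right h1 (hf0 n)
      _ = 2 * (Real.sqrt (1 + (n : ℝ) ^ 2) * f n) := by ring
  have hsum1 : Summable fun n : ℕ => ((n : ℝ) + 1) * f n := by
    apply Summable.of_nonneg_of_le (fun n => by positivity) hbound (hh.mul_left 2)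
  have hsumf : Summable f := by
    apply Summable.of_nonneg_of_le hf0 (fun n => ?_) hsum1
    nlinarith [hf0 n, Nat.cast_nonneg (α := ℝ) n]
  have hsumd : Summable fun k : ℕ => (k : ℝ) * f k := by
    apply Summable.of_nonneg_of_le (fun n => by positivity) (fun n => ?_) hsum1
    nlinarith [hf0 n]
  -- double sum F(n,p) = f(n+p)
  set F : ℕ × ℕ → ℝ := fun q => f (q.1 + q.2) with hF_def
  have hFe : ∀ x : Σ k : ℕ, Fin (k + 1), F (sigmaEquiv x) = f x.1 := by
    rintro ⟨k, ⟨i, hi⟩⟩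
    simp only [hF_def, sigmaEquiv, Equiv.coe_fn_mk]
    congr 1
    omega
  have hsumSig : Summable fun x : Σ k : ℕ, Fin (k + 1) => F (sigmaEquiv x) := by
    rw [show (fun x : Σ k : ℕ, Fin (k + 1) => F (sigmaEquiv x)) =
        fun x : Σ k : ℕ, Fin (k + 1) => f x.1 from funext hFe]
    apply (summable_sigma_of_nonneg (fun x => hf0 x.1)).mpr
    constructor
    · intro k; exact summable_of_finite_support (Set.toFinite _)
    · have : ∀ k : ℕ, (∑' _ : Fin (k + 1), f k) = ((k : ℝ) + 1) * f k := by
        intro k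
        rw [tsum_fintype]
        simp [Finset.sum_const, nsmul_eq_mul]
      simpa [this] using hsum1
  have hsumF : Summable F := (Equiv.summable_iff sigmaEquiv).mp hsumSig
  have hFtot : ∑' q : ℕ × ℕ, F q = ∑' k : ℕ, ((k : ℝ) + 1) * f k := by
    rw [← sigmaEquiv.tsum_eq, tsum_congr hFe, Summable.tsum_sigma]
    · apply tsum_congr
      intro k
      rw [tsum_fintype]
      show (∑ _x : Fin (k + 1), f k) = ((k : ℝ) + 1) * f k
      rw [Finset.sum_const, Finset.card_univ, Fintype.card_fin, nsmul_eq_mul]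
      push_cast
      ring
    · rw [show (fun x : Σ k : ℕ, Fin (k + 1) => f x.1) =
        fun x : Σ k : ℕ, Fin (k + 1) => F (sigmaEquiv x) from (funext hFe).symm]
      exact hsumSig
  -- per-n estimates
  have hsumrow : ∀ n : ℕ, Summable fun p : ℕ => f (n + p) := by
    intro n
    exact hsumf.comp_injective (add_right_injective n)
  set B : ℕ → ℝ := fun n => ∑' p : ℕ, f (n + p) with hB_def
  set U : ℝ := l2sq u with hU_def
  have hU0 : 0 ≤ U := tsum_nonneg fun n => sq_nonneg _
  have hCS : ∀ n : ℕ, ‖Tbar u h n‖ ^ 2 ≤ B n * U := by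
    intro n
    obtain ⟨hs, hq⟩ := cs_tsum (fun p => ‖h (n + p)‖) (fun p => ‖u p‖)
      (fun p => norm_nonneg _) (fun p => norm_nonneg _) (hsumrow n) hu
    have hnorm : ∀ p : ℕ, ‖h (n + p) * (starRingEnd ℂ) (u p)‖ = ‖h (n + p)‖ * ‖u p‖ := by
      intro p; rw [norm_mul, RCLike.norm_conj]
    have h1 : ‖Tbar u h n‖ ≤ ∑' p : ℕ, ‖h (n + p)‖ * ‖u p‖ := by
      calc ‖Tbar u h n‖ ≤ ∑' p : ℕ, ‖h (n + p) * (starRingEnd ℂ) (u p)‖ :=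
            norm_tsum_le_tsum_norm (by simpa [hnorm] using hs)
        _ = ∑' p : ℕ, ‖h (n + p)‖ * ‖u p‖ := tsum_congr hnorm
    calc ‖Tbar u h n‖ ^ 2 ≤ (∑' p : ℕ, ‖h (n + p)‖ * ‖u p‖) ^ 2 := by
          apply pow_le_pow_left₀ (norm_nonneg _) h1
      _ ≤ B n * U := hq
  -- sum over n
  have hsumB : Summable B := by
    have := (summable_prod_of_nonneg (f := F) (fun q => hf0 _)).mp hsumF
    exact this.2
  have hBU : Summable fun n => B n * U := hsumB.mul_right U
  have hsumT : Summable fun n => ‖Tbar u h n‖ ^ 2 :=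
    Summable.of_nonneg_of_le (fun n => sq_nonneg _) hCS hBU
  have hmain : l2sq (Tbar u h) ≤ (∑' n, B n) * U := by
    rw [← tsum_mul_right]
    exact Summable.tsum_le_tsum hCS hsumT hBU
  have hBtot : ∑' n, B n = ∑' k : ℕ, ((k : ℝ) + 1) * f k := by
    rw [← hFtot, Summable.tsum_prod' hsumF hsumrow]
  have hfinal : (∑' k : ℕ, ((k : ℝ) + 1) * f k) = dform h + l2sq h := by
    rw [show (fun k : ℕ => ((k : ℝ) + 1) * f k) =
        fun k : ℕ => (k : ℝ) * f k + f k from funext fun k => by ring,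
      Summable.tsum_add hsumd hsumf]
    rfl
  rw [hBtot, hfinal] at hmain
  exact hmain

end
end

section
/- Let u ∈ H^s_+(𝕋) with s > 3/2 and L_u = D − T_u T_ū on L^2_+(𝕋). Then [S*, L_u] = S* − ⟨·, u⟩ S* u, where S is the shift operator. -/
open scoped BigOperators
open Filter

noncomputable section

/-- For `u ∈ H^s₊(𝕋)`, `s > 3/2`, and `L_u = D - T_u T_ū`,
`[S*, L_u] = S* − ⟨·, u⟩ S*u` (on the domain `H¹₊(𝕋)`). -/
theorem shift_lax_commutator (s : ℝ) (hs : 3/2 < s) (u : ℕ → ℂ) (hu : MemHs s u) :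
    ∀ h : ℕ → ℂ, MemHs 1 h → ∀ n : ℕ,
      Sstar (Lop u h) n - Lop u (Sstar h) n
        = Sstar h n - hinner h u * Sstar u n := by
  intro h _ n
  have hTbar : ∀ k : ℕ, Tbar u (Sstar h) k = Tbar u h (k + 1) := by
    intro k
    unfold Tbar Sstar
    congr 1; funext p; congr 2; omega
  have hin : Tbar u h 0 = hinner h u := by
    simp [Tbar, hinner]
  simp only [Sstar, Lop, Dop, Tan, hTbar]
  rw [Finset.sum_range_succ' (fun k => u (n + 1 - k) * Tbar u h k) (n + 1)]
  simp only [Nat.succ_sub_succ, Nat.sub_zero, hin]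
  push_cast
  ring

end
end

section
/- Let u ∈ H^s_+(𝕋) with s > 3/2, L_u = D − T_u T_ū and B_u = T_u T_{∂_x ū} − T_{∂_x u} T_ū + i (T_u T_ū)². Then [S*, B_u] = i(S* L_u² − (L_u + Id)² S*). -/
open scoped BigOperators
open Filter

noncomputable section

/-! ### Auxiliary lemmas for `shift_B_commutator` -/

private lemma tbar_sstar (v f : ℕ → ℂ) : Tbar v (Sstar f) = Sstar (Tbar v f) := by
  funext n
  simp only [Tbar, Sstar]
  exact tsum_congr fun p => by rw [show n + p + 1 = n + 1 + p by omega]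

private lemma tan_sstar (v f : ℕ → ℂ) (n : ℕ) :
    Tan v (Sstar f) n = Tan v f (n + 1) - f 0 * v (n + 1) := by
  simp only [Tan, Sstar]
  conv_rhs => rw [Finset.sum_range_succ']
  simp only [Nat.succ_sub_succ_eq_sub, Nat.sub_zero]
  ring

private lemma tan_sstar' (v f : ℕ → ℂ) (n : ℕ) :
    Tan v (Sstar f) n = Sstar (Tan v f) n - f 0 * Sstar v n := tan_sstar v f n

private lemma summable_term (u : ℕ → ℂ) (hus : Summable fun p => ‖u p‖)
    (f : ℕ → ℂ) (C : ℝ) (hf : ∀ m, ‖f m‖ ≤ C) (n : ℕ) :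
    Summable fun p => f (n + p) * (starRingEnd ℂ) (u p) := by
  apply Summable.of_norm
  refine (hus.mul_left C).of_nonneg_of_le (fun p => norm_nonneg _) (fun p => ?_)
  rw [norm_mul, RCLike.norm_conj]
  exact mul_le_mul_of_nonneg_right (hf _) (norm_nonneg _)

private lemma tbar_split2 (u : ℕ → ℂ) (hus : Summable fun p => ‖u p‖)
    (f g : ℕ → ℂ) (Cf Cg : ℝ) (hf : ∀ m, ‖f m‖ ≤ Cf) (hg : ∀ m, ‖g m‖ ≤ Cg)
    (c : ℂ) (n : ℕ) :
    Tbar u (fun m => f m - c * g m) n = Tbar u f n - c * Tbar u g n := by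
  have Sf := summable_term u hus f Cf hf n
  have Sg := summable_term u hus g Cg hg n
  simp only [Tbar]
  rw [show (fun p => (f (n + p) - c * g (n + p)) * (starRingEnd ℂ) (u p))
      = fun p => f (n + p) * (starRingEnd ℂ) (u p)
          - c * (g (n + p) * (starRingEnd ℂ) (u p)) from funext fun p => by ring]
  rw [Summable.tsum_sub Sf (Sg.mul_left c), tsum_mul_left]

private lemma tbar_sub (u : ℕ → ℂ) (hus : Summable fun p => ‖u p‖)
    (f g : ℕ → ℂ) (Cf Cg : ℝ) (hf : ∀ m, ‖f m‖ ≤ Cf) (hg : ∀ m, ‖g m‖ ≤ Cg)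
    (n : ℕ) :
    Tbar u (fun m => f m - g m) n = Tbar u f n - Tbar u g n := by
  have Sf := summable_term u hus f Cf hf n
  have Sg := summable_term u hus g Cg hg n
  simp only [Tbar]
  rw [show (fun p => (f (n + p) - g (n + p)) * (starRingEnd ℂ) (u p))
      = fun p => f (n + p) * (starRingEnd ℂ) (u p)
          - g (n + p) * (starRingEnd ℂ) (u p) from funext fun p => by ring]
  exact Summable.tsum_sub Sf Sg

private lemma tbar_split3 (u : ℕ → ℂ) (hus : Summable fun p => ‖u p‖)
    (f g w : ℕ → ℂ) (Cf Cg Cw : ℝ)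
    (hf : ∀ m, ‖f m‖ ≤ Cf) (hg : ∀ m, ‖g m‖ ≤ Cg) (hw : ∀ m, ‖w m‖ ≤ Cw)
    (c : ℂ) (n : ℕ) :
    Tbar u (fun m => f m - g m + c * w m) n
      = Tbar u f n - Tbar u g n + c * Tbar u w n := by
  have Sf := summable_term u hus f Cf hf n
  have Sg := summable_term u hus g Cg hg n
  have Sw := summable_term u hus w Cw hw n
  simp only [Tbar]
  rw [show (fun p => (f (n + p) - g (n + p) + c * w (n + p)) * (starRingEnd ℂ) (u p))
      = fun p => (f (n + p) * (starRingEnd ℂ) (u p)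
          - g (n + p) * (starRingEnd ℂ) (u p))
          + c * (w (n + p) * (starRingEnd ℂ) (u p)) from funext fun p => by ring]
  rw [Summable.tsum_add (Sf.sub Sg) (Sw.mul_left c), Summable.tsum_sub Sf Sg, tsum_mul_left]

private lemma tan_split2 (v f g : ℕ → ℂ) (c : ℂ) (n : ℕ) :
    Tan v (fun m => f m - c * g m) n = Tan v f n - c * Tan v g n := by
  simp only [Tan, Finset.mul_sum, ← Finset.sum_sub_distrib]
  exact Finset.sum_congr rfl fun k _ => by ring

private lemma tan_split3 (v f g w : ℕ → ℂ) (c : ℂ) (n : ℕ) :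
    Tan v (fun m => f m - g m + c * w m) n
      = Tan v f n - Tan v g n + c * Tan v w n := by
  simp only [Tan, Finset.mul_sum, ← Finset.sum_sub_distrib, ← Finset.sum_add_distrib]
  exact Finset.sum_congr rfl fun k _ => by ring

private lemma summable_norm_term (u : ℕ → ℂ) (hus : Summable fun p => ‖u p‖)
    (f : ℕ → ℂ) (C : ℝ) (hf : ∀ m, ‖f m‖ ≤ C) (n : ℕ) :
    Summable fun p => ‖f (n + p) * (starRingEnd ℂ) (u p)‖ := by
  refine (hus.mul_left C).of_nonneg_of_le (fun p => norm_nonneg _) (fun p => ?_)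
  rw [norm_mul, RCLike.norm_conj]
  exact mul_le_mul_of_nonneg_right (hf _) (norm_nonneg _)

private lemma tbar_bound (u : ℕ → ℂ) (hus : Summable fun p => ‖u p‖)
    (f : ℕ → ℂ) (C : ℝ) (hf : ∀ m, ‖f m‖ ≤ C) (hC : 0 ≤ C) (n : ℕ) :
    ‖Tbar u f n‖ ≤ C * ∑' p, ‖u p‖ := by
  have S := summable_norm_term u hus f C hf n
  calc ‖Tbar u f n‖ ≤ ∑' p, ‖f (n + p) * (starRingEnd ℂ) (u p)‖ :=
        norm_tsum_le_tsum_norm S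
    _ ≤ ∑' p, C * ‖u p‖ := by
        refine Summable.tsum_le_tsum (fun p => ?_) S (hus.mul_left C)
        rw [norm_mul, RCLike.norm_conj]
        exact mul_le_mul_of_nonneg_right (hf _) (norm_nonneg _)
    _ = C * ∑' p, ‖u p‖ := tsum_mul_left

private lemma tan_bound (v f : ℕ → ℂ) (C : ℝ) (hvs : Summable fun p => ‖v p‖)
    (hf : ∀ m, ‖f m‖ ≤ C) (hC : 0 ≤ C) (n : ℕ) :
    ‖Tan v f n‖ ≤ (∑' p, ‖v p‖) * C := by
  have h1 : ‖Tan v f n‖ ≤ ∑ k ∈ Finset.range (n + 1), ‖v (n - k)‖ * C := by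
    refine (norm_sum_le _ _).trans (Finset.sum_le_sum fun k _ => ?_)
    rw [norm_mul]
    exact mul_le_mul_of_nonneg_left (hf _) (norm_nonneg _)
  have h2 : ∑ k ∈ Finset.range (n + 1), ‖v (n - k)‖
      = ∑ k ∈ Finset.range (n + 1), ‖v k‖ := by
    have := Finset.sum_range_reflect (fun j => ‖v j‖) (n + 1)
    simpa using this
  calc ‖Tan v f n‖ ≤ (∑ k ∈ Finset.range (n + 1), ‖v (n - k)‖) * C := by
        rw [← Finset.sum_mul] at h1; exact h1
    _ ≤ (∑' p, ‖v p‖) * C := by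
        refine mul_le_mul_of_nonneg_right ?_ hC
        rw [h2]
        exact Summable.sum_le_tsum (Finset.range (n + 1)) (fun _ _ => norm_nonneg _) hvs

private lemma summable_inv_one_add_sq : Summable fun n : ℕ => (1 + (n : ℝ) ^ 2)⁻¹ := by
  rw [← summable_nat_add_iff 1]
  refine ((summable_nat_add_iff 1).mpr
      (Real.summable_nat_pow_inv.mpr one_lt_two)).of_nonneg_of_le
    (fun n => by positivity) (fun n => ?_)
  have hp : (0:ℝ) < ((n + 1 : ℕ) : ℝ) ^ 2 := by positivity
  refine inv_anti₀ hp ?_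
  push_cast
  nlinarith [sq_nonneg ((n : ℝ))]

private lemma memHs_summable_norm {s : ℝ} (hs : 1 ≤ s) {u : ℕ → ℂ} (hu : MemHs s u) :
    Summable fun n => ‖u n‖ := by
  refine (summable_inv_one_add_sq.add hu).of_nonneg_of_le (fun n => norm_nonneg _)
    (fun n => ?_)
  set a : ℝ := 1 + (n : ℝ) ^ 2 with ha
  have ha1 : (1:ℝ) ≤ a := by nlinarith [sq_nonneg ((n:ℝ))]
  have hA1 : a ≤ a ^ s := by
    nth_rewrite 1 [← Real.rpow_one a]
    exact Real.rpow_le_rpow_of_exponent_le ha1 hs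
  have hA : (0:ℝ) < a ^ s := Real.rpow_pos_of_pos (by linarith) s
  have ht : (0:ℝ) ≤ ‖u n‖ := norm_nonneg _
  have key : 2 * ‖u n‖ ≤ (a ^ s)⁻¹ + a ^ s * ‖u n‖ ^ 2 := by
    have h1 : (0:ℝ) ≤ (a ^ s)⁻¹ * (1 - a ^ s * ‖u n‖) ^ 2 :=
      mul_nonneg (inv_nonneg.mpr hA.le) (sq_nonneg _)
    have h2 : a ^ s * (a ^ s)⁻¹ = 1 := mul_inv_cancel₀ hA.ne'
    nlinarith [h1, h2, sq_nonneg (1 - a ^ s * ‖u n‖)]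
  have hinva : (a ^ s)⁻¹ ≤ a⁻¹ := by
    refine inv_anti₀ (by linarith) hA1
  nlinarith [mul_nonneg hA.le (sq_nonneg ‖u n‖)]

private lemma memHs2_summable_mul {h : ℕ → ℂ} (hh : MemHs 2 h) :
    Summable fun n : ℕ => (n : ℝ) * ‖h n‖ := by
  have hh' : Summable fun n : ℕ => (1 + (n : ℝ) ^ 2) ^ (2:ℕ) * ‖h n‖ ^ 2 := by
    refine hh.congr fun n => ?_
    rw [show ((2:ℝ)) = ((2:ℕ):ℝ) by norm_num, Real.rpow_natCast]
  refine (summable_inv_one_add_sq.add hh').of_nonneg_of_le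
    (fun n => mul_nonneg (Nat.cast_nonneg n) (norm_nonneg _)) (fun n => ?_)
  set a : ℝ := 1 + (n : ℝ) ^ 2 with ha
  have ha0 : (0:ℝ) < a := by positivity
  have hab : a * a⁻¹ = 1 := mul_inv_cancel₀ ha0.ne'
  have ht : (0:ℝ) ≤ ‖h n‖ := norm_nonneg _
  have hn2 : ((n:ℝ)) ^ 2 ≤ a := by nlinarith
  have hbnn : (0:ℝ) ≤ a⁻¹ := inv_nonneg.mpr ha0.le
  have e1 : (n:ℝ) * a⁻¹ * (a * ‖h n‖) = (n:ℝ) * ‖h n‖ := by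
    calc (n:ℝ) * a⁻¹ * (a * ‖h n‖) = ((n:ℝ) * ‖h n‖) * (a * a⁻¹) := by ring
      _ = (n:ℝ) * ‖h n‖ := by rw [hab, mul_one]
  have e2 : ((n:ℝ) * a⁻¹) ^ 2 ≤ a⁻¹ := by
    have h3 : ((n:ℝ)) ^ 2 * (a⁻¹) ^ 2 ≤ a * (a⁻¹) ^ 2 :=
      mul_le_mul_of_nonneg_right hn2 (sq_nonneg _)
    calc ((n:ℝ) * a⁻¹) ^ 2 = ((n:ℝ)) ^ 2 * (a⁻¹) ^ 2 := by ring
      _ ≤ a * (a⁻¹) ^ 2 := h3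
      _ = a⁻¹ * (a * a⁻¹) := by ring
      _ = a⁻¹ := by rw [hab, mul_one]
  nlinarith [sq_nonneg ((n : ℝ) * a⁻¹ - a * ‖h n‖), e1, e2,
    mul_nonneg (Nat.cast_nonneg n : (0:ℝ) ≤ (n:ℝ)) ht]

/-- For `u ∈ H^s₊(𝕋)`, `s > 3/2`,
`[S*, B_u] = i (S* L_u² − (L_u + Id)² S*)`. -/
theorem shift_B_commutator (s : ℝ) (hs : 3/2 < s) (u : ℕ → ℂ) (hu : MemHs s u) :
    ∀ h : ℕ → ℂ, MemHs 2 h → ∀ n : ℕ,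
      Sstar (Bop u h) n - Bop u (Sstar h) n
        = Complex.I * (Sstar (Lop u (Lop u h)) n
            - (Lop u (Lop u (Sstar h)) n + 2 * Lop u (Sstar h) n + Sstar h n)) := by
  intro h hh n
  -- summability and bounds
  have hus : Summable fun p => ‖u p‖ := memHs_summable_norm (by linarith) hu
  have hhs : Summable fun p => ‖h p‖ := memHs_summable_norm (by norm_num) hh
  have hds : Summable fun p : ℕ => (p : ℝ) * ‖h p‖ := memHs2_summable_mul hh
  have hCu : (0:ℝ) ≤ ∑' p, ‖u p‖ := tsum_nonneg fun p => norm_nonneg _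
  have hCh : (0:ℝ) ≤ ∑' p, ‖h p‖ := tsum_nonneg fun p => norm_nonneg _
  have hCD : (0:ℝ) ≤ ∑' p : ℕ, (p : ℝ) * ‖h p‖ :=
    tsum_nonneg fun p => mul_nonneg (Nat.cast_nonneg _) (norm_nonneg _)
  have hub : ∀ m, ‖u m‖ ≤ ∑' p, ‖u p‖ := fun m => Summable.le_tsum hus m fun j _ => norm_nonneg _
  have hhb : ∀ m, ‖h m‖ ≤ ∑' p, ‖h p‖ := fun m => Summable.le_tsum hhs m fun j _ => norm_nonneg _
  have hdb : ∀ m, ‖Dop h m‖ ≤ ∑' p : ℕ, (p : ℝ) * ‖h p‖ := by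
    intro m
    have e : ‖Dop h m‖ = (m : ℝ) * ‖h m‖ := by
      simp [Dop, norm_mul]
    rw [e]
    exact Summable.le_tsum hds m fun j _ => mul_nonneg (Nat.cast_nonneg _) (norm_nonneg _)
  have hTbarh : ∀ m, ‖Tbar u h m‖ ≤ (∑' p, ‖h p‖) * ∑' p, ‖u p‖ :=
    tbar_bound u hus h _ hhb hCh
  have hTTh : ∀ m, ‖Tan u (Tbar u h) m‖
      ≤ (∑' p, ‖u p‖) * ((∑' p, ‖h p‖) * ∑' p, ‖u p‖) :=
    tan_bound u (Tbar u h) _ hus hTbarh (mul_nonneg hCh hCu)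
  have bSu : ∀ m, ‖Sstar u m‖ ≤ ∑' p, ‖u p‖ := fun m => hub (m + 1)
  have bSh : ∀ m, ‖Sstar h m‖ ≤ ∑' p, ‖h p‖ := fun m => hhb (m + 1)
  have bSTT : ∀ m, ‖Sstar (Tan u (Tbar u h)) m‖
      ≤ (∑' p, ‖u p‖) * ((∑' p, ‖h p‖) * ∑' p, ‖u p‖) := fun m => hTTh (m + 1)
  have bSL : ∀ m, ‖Sstar (Lop u h) m‖
      ≤ (∑' p : ℕ, (p : ℝ) * ‖h p‖)
        + (∑' p, ‖u p‖) * ((∑' p, ‖h p‖) * ∑' p, ‖u p‖) := fun m =>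
    (norm_sub_le (Dop h (m+1)) (Tan u (Tbar u h) (m+1))).trans
      (add_le_add (hdb (m+1)) (hTTh (m+1)))
  -- structural identities
  have hTbS : Tbar u (Sstar h) = Sstar (Tbar u h) := tbar_sstar u h
  have hTTS : Tan u (Tbar u (Sstar h))
      = fun m => Sstar (Tan u (Tbar u h)) m - Tbar u h 0 * Sstar u m := by
    rw [hTbS]; funext m; exact tan_sstar' u (Tbar u h) m
  have hLS : Lop u (Sstar h)
      = fun m => Sstar (Lop u h) m - Sstar h m + Tbar u h 0 * Sstar u m := by
    funext m
    show (m : ℂ) * Sstar h m - Tan u (Tbar u (Sstar h)) m = _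
    simp only [hTTS]
    have e : Sstar (Lop u h) m
        = ((m + 1 : ℕ) : ℂ) * Sstar h m - Sstar (Tan u (Tbar u h)) m := rfl
    rw [e]
    push_cast
    ring
  have h3a : Tbar u (fun m => Sstar (Tan u (Tbar u h)) m - Tbar u h 0 * Sstar u m)
      = fun m => Sstar (Tbar u (Tan u (Tbar u h))) m
          - Tbar u h 0 * Sstar (Tbar u u) m := by
    funext m
    rw [tbar_split2 u hus (Sstar (Tan u (Tbar u h))) (Sstar u) _ _ bSTT bSu
      (Tbar u h 0) m]
    simp only [tbar_sstar]
  have h4a : Tbar u (fun m => Sstar (Lop u h) m - Sstar h m + Tbar u h 0 * Sstar u m)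
      = fun m => Sstar (Tbar u (Lop u h)) m - Sstar (Tbar u h) m
          + Tbar u h 0 * Sstar (Tbar u u) m := by
    funext m
    rw [tbar_split3 u hus (Sstar (Lop u h)) (Sstar h) (Sstar u) _ _ _ bSL bSh bSu
      (Tbar u h 0) m]
    simp only [tbar_sstar]
  -- the four main components
  have hA : Sstar (Bop u h) n
      = Sstar (Tan u (Tbar (dx u) h)) n - Sstar (Tan (dx u) (Tbar u h)) n
        + Complex.I * Sstar (Tan u (Tbar u (Tan u (Tbar u h)))) n := rfl
  have hBfull : Bop u (Sstar h) n
      = (Sstar (Tan u (Tbar (dx u) h)) n - Tbar (dx u) h 0 * Sstar u n)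
        - (Sstar (Tan (dx u) (Tbar u h)) n - Tbar u h 0 * Sstar (dx u) n)
        + Complex.I * ((Sstar (Tan u (Tbar u (Tan u (Tbar u h)))) n
            - Tbar u (Tan u (Tbar u h)) 0 * Sstar u n)
          - Tbar u h 0 * (Sstar (Tan u (Tbar u u)) n - Tbar u u 0 * Sstar u n)) := by
    show Tan u (Tbar (dx u) (Sstar h)) n - Tan (dx u) (Tbar u (Sstar h)) n
        + Complex.I * Tan u (Tbar u (Tan u (Tbar u (Sstar h)))) n = _
    simp only [hTTS]
    rw [h3a]
    rw [tan_split2 u (Sstar (Tbar u (Tan u (Tbar u h)))) (Sstar (Tbar u u))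
      (Tbar u h 0) n]
    simp only [tbar_sstar, tan_sstar']
  have hL2 : Sstar (Lop u (Lop u h)) n
      = ((n + 1 : ℕ) : ℂ) * Sstar (Lop u h) n
        - Sstar (Tan u (Tbar u (Lop u h))) n := rfl
  have hL1 : Sstar (Lop u h) n
      = ((n + 1 : ℕ) : ℂ) * Sstar h n - Sstar (Tan u (Tbar u h)) n := rfl
  have hL2Sfull : Lop u (Lop u (Sstar h)) n
      = (n : ℂ) * (Sstar (Lop u h) n - Sstar h n + Tbar u h 0 * Sstar u n)
        - ((Sstar (Tan u (Tbar u (Lop u h))) n - Tbar u (Lop u h) 0 * Sstar u n)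
          - (Sstar (Tan u (Tbar u h)) n - Tbar u h 0 * Sstar u n)
          + Tbar u h 0 * (Sstar (Tan u (Tbar u u)) n - Tbar u u 0 * Sstar u n)) := by
    show (n : ℂ) * Lop u (Sstar h) n - Tan u (Tbar u (Lop u (Sstar h))) n = _
    simp only [hLS]
    rw [h4a]
    rw [tan_split3 u (Sstar (Tbar u (Lop u h))) (Sstar (Tbar u h)) (Sstar (Tbar u u))
      (Tbar u h 0) n]
    simp only [tan_sstar']
  have hLSn : Lop u (Sstar h) n
      = Sstar (Lop u h) n - Sstar h n + Tbar u h 0 * Sstar u n := by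
    simp only [hLS]
  have hdL : Tbar u (Lop u h) 0
      = Tbar u (Dop h) 0 - Tbar u (Tan u (Tbar u h)) 0 := by
    have e : Lop u h = fun m => Dop h m - Tan u (Tbar u h) m := rfl
    rw [e, tbar_sub u hus (Dop h) (Tan u (Tbar u h)) _ _ hdb hTTh 0]
  have he : Tbar (dx u) h 0 = -Complex.I * Tbar u (Dop h) 0 := by
    simp only [Tbar, dx, Dop]
    rw [← tsum_mul_left]
    refine tsum_congr fun p => ?_
    simp only [zero_add, map_mul, Complex.conj_I, map_natCast]
    ring
  have hdxS : Sstar (dx u) n = Complex.I * ((n : ℂ) + 1) * Sstar u n := by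
    show Complex.I * ((n + 1 : ℕ) : ℂ) * Sstar u n = _
    push_cast
    ring
  rw [hA, hBfull, hL2, hL2Sfull, hLSn, hL1, hdL, he, hdxS]
  push_cast
  ring

end
end

section
/- If u ∈ C([−T,T], H^s_+(𝕋)), s > 3/2, solves i∂_t u + ∂_x² u + 2DΠ(|u|²)u = 0, then ∂_t u = B_u u − i L_u² u, with L_u = D − T_u T_ū and B_u = T_u T_{∂_x ū} − T_{∂_x u} T_ū + i(T_u T_ū)². -/
open scoped BigOperators
open Filter

noncomputable section

/-- Summability of the weighted `ℓ¹` norm from `H^s`, `s > 3/2`. -/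
lemma memHs_weighted_l1 {s : ℝ} (hs : 3/2 < s) {v : ℕ → ℂ} (hv : MemHs s v) :
    Summable fun p : ℕ => (1 + (p : ℝ)) * ‖v p‖ := by
  have hr : Summable fun p : ℕ => ((1 : ℝ) + (p : ℝ) ^ 2) ^ (1 - s) := by
    rw [← summable_nat_add_iff 1]
    have htarget : Summable fun n : ℕ => ((n + 1 : ℕ) : ℝ) ^ (2 * (1 - s)) :=
      (summable_nat_add_iff 1).mpr (Real.summable_nat_rpow.2 (by linarith))
    refine Summable.of_nonneg_of_le (fun n => Real.rpow_nonneg (by positivity) _)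
      (fun n => ?_) htarget
    have hx : (0 : ℝ) < ((n + 1 : ℕ) : ℝ) := by positivity
    have h1 : ((n + 1 : ℕ) : ℝ) ^ (2 * (1 - s)) = (((n + 1 : ℕ) : ℝ) ^ 2) ^ (1 - s) := by
      rw [← Real.rpow_natCast ((n + 1 : ℕ) : ℝ) 2, ← Real.rpow_mul hx.le]
      norm_num
    rw [h1]
    exact Real.rpow_le_rpow_of_nonpos (by positivity) (by push_cast; nlinarith) (by linarith)
  have hcomp : Summable fun p : ℕ =>
      2 * ((1 : ℝ) + (p : ℝ) ^ 2) ^ (1 - s) + (1 + (p : ℝ) ^ 2) ^ s * ‖v p‖ ^ 2 :=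
    (hr.mul_left 2).add hv
  refine Summable.of_nonneg_of_le (fun p => by positivity) (fun p => ?_) hcomp
  set t : ℝ := 1 + (p : ℝ) ^ 2 with ht
  have htpos : (0 : ℝ) < t := by positivity
  set A : ℝ := t ^ (1 - s) with hA
  set B : ℝ := t ^ s with hB
  have hAB : A * B = t := by
    rw [hA, hB, ← Real.rpow_add htpos]
    norm_num
  have hAnn : 0 ≤ A := Real.rpow_nonneg htpos.le _
  have hBnn : 0 ≤ B := Real.rpow_nonneg htpos.le _
  set x : ℝ := ‖v p‖ with hx
  have hxnn : 0 ≤ x := norm_nonneg _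
  have hc : (0 : ℝ) ≤ 1 + (p : ℝ) := by positivity
  have hc2 : (1 + (p : ℝ)) ^ 2 * x ^ 2 ≤ 2 * (A * B) * x ^ 2 := by
    rw [hAB, ht]
    have : (1 + (p : ℝ)) ^ 2 ≤ 2 * (1 + (p : ℝ) ^ 2) := by nlinarith [sq_nonneg ((p : ℝ) - 1)]
    nlinarith [sq_nonneg x]
  have hrhs : (0 : ℝ) ≤ 2 * A + B * x ^ 2 := by positivity
  have hsq : ((1 + (p : ℝ)) * x) ^ 2 ≤ (2 * A + B * x ^ 2) ^ 2 := by
    nlinarith [hc2, sq_nonneg (2 * A - B * x ^ 2),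
      mul_nonneg (mul_nonneg hAnn hBnn) (sq_nonneg x)]
  have := (pow_le_pow_iff_left₀ (mul_nonneg hc hxnn) hrhs (two_ne_zero)).mp hsq
  linarith

/-- The core algebraic identity behind the Lax-pair reformulation. -/
lemma main_identity (v : ℕ → ℂ) (h1 : Summable fun p : ℕ => ‖v p‖)
    (h1' : Summable fun p : ℕ => (p : ℝ) * ‖v p‖) (n : ℕ) :
    Complex.I * (-(n : ℂ) ^ 2 * v n + 2 * NLcoeff v n)
      = Bop v v n - Complex.I * Lop v (Lop v v) n := by
  set C1 : ℝ := ∑' q : ℕ, ‖v q‖ with hC1def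
  have hb : ∀ m, ‖v m‖ ≤ C1 := fun m => Summable.le_tsum h1 m fun _ _ => norm_nonneg _
  have hC1 : 0 ≤ C1 := tsum_nonneg fun _ => norm_nonneg _
  -- summability of the various series
  have SN0 : ∀ k : ℕ, Summable fun p : ℕ => ‖v (k + p) * (starRingEnd ℂ) (v p)‖ := by
    intro k
    refine Summable.of_nonneg_of_le (fun p => norm_nonneg _) (fun p => ?_) (h1.mul_left C1)
    rw [norm_mul, RCLike.norm_conj]
    exact mul_le_mul_of_nonneg_right (hb _) (norm_nonneg _)
  have S0 : ∀ k : ℕ, Summable fun p : ℕ => v (k + p) * (starRingEnd ℂ) (v p) :=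
    fun k => (SN0 k).of_norm
  have S1 : ∀ k : ℕ, Summable fun p : ℕ =>
      v (k + p) * (starRingEnd ℂ) (Complex.I * (p : ℂ) * v p) := by
    intro k
    apply Summable.of_norm
    refine Summable.of_nonneg_of_le (fun p => norm_nonneg _) (fun p => ?_) (h1'.mul_left C1)
    rw [norm_mul, RCLike.norm_conj, norm_mul, norm_mul, Complex.norm_I, one_mul,
      Complex.norm_natCast]
    exact mul_le_mul_of_nonneg_right (hb _) (by positivity)
  have S2 : ∀ k : ℕ, Summable fun p : ℕ => Dop v (k + p) * (starRingEnd ℂ) (v p) := by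
    intro k
    apply Summable.of_norm
    refine Summable.of_nonneg_of_le (fun p => norm_nonneg _) (fun p => ?_)
      ((h1'.mul_left C1).add ((h1.mul_left (C1 * (k : ℝ)))))
    have heq : ‖Dop v (k + p) * (starRingEnd ℂ) (v p)‖
        = ((k : ℝ) + (p : ℝ)) * (‖v (k + p)‖ * ‖v p‖) := by
      simp only [Dop, norm_mul, RCLike.norm_conj, Complex.norm_natCast]
      push_cast; ring
    rw [heq]
    have hbd : ‖v (k + p)‖ * ‖v p‖ ≤ C1 * ‖v p‖ :=
      mul_le_mul_of_nonneg_right (hb _) (norm_nonneg _)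
    have hp : (0 : ℝ) ≤ (p : ℝ) := by positivity
    have hk : (0 : ℝ) ≤ (k : ℝ) := by positivity
    nlinarith [mul_le_mul_of_nonneg_left hbd hp, mul_le_mul_of_nonneg_left hbd hk,
      norm_nonneg (v p), norm_nonneg (v (k + p))]
  -- bound on `T_u T_ū`
  have hTb : ∀ j : ℕ, ‖Tbar v v j‖ ≤ C1 * C1 := by
    intro j
    have h1le : ∑' p : ℕ, ‖v (j + p) * (starRingEnd ℂ) (v p)‖ ≤ C1 * C1 := by
      rw [show C1 * C1 = ∑' p : ℕ, C1 * ‖v p‖ by rw [tsum_mul_left]]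
      refine Summable.tsum_le_tsum (fun p => ?_) (SN0 j) (h1.mul_left C1)
      rw [norm_mul, RCLike.norm_conj]
      exact mul_le_mul_of_nonneg_right (hb _) (norm_nonneg _)
    exact le_trans (norm_tsum_le_tsum_norm (SN0 j)) h1le
  have hA : ∀ m : ℕ, ‖Tan v (Tbar v v) m‖ ≤ C1 * (C1 * C1) := by
    intro m
    calc ‖∑ k ∈ Finset.range (m + 1), v (m - k) * Tbar v v k‖
        ≤ ∑ k ∈ Finset.range (m + 1), ‖v (m - k) * Tbar v v k‖ := norm_sum_le _ _
      _ ≤ ∑ k ∈ Finset.range (m + 1), ‖v (m - k)‖ * (C1 * C1) := by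
          refine Finset.sum_le_sum fun k _ => ?_
          rw [norm_mul]
          exact mul_le_mul_of_nonneg_left (hTb k) (norm_nonneg _)
      _ = (∑ k ∈ Finset.range (m + 1), ‖v (m - k)‖) * (C1 * C1) := by
          rw [Finset.sum_mul]
      _ ≤ C1 * (C1 * C1) := by
          refine mul_le_mul_of_nonneg_right ?_ (by positivity)
          have hre : ∑ k ∈ Finset.range (m + 1), ‖v (m - k)‖
              = ∑ k ∈ Finset.range (m + 1), ‖v k‖ := by
            have := Finset.sum_range_reflect (fun i => ‖v i‖) (m + 1)
            simpa using this
          rw [hre]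
          exact Summable.sum_le_tsum _ (fun _ _ => norm_nonneg _) h1
  have S3 : ∀ k : ℕ, Summable fun p : ℕ =>
      Tan v (Tbar v v) (k + p) * (starRingEnd ℂ) (v p) := by
    intro k
    apply Summable.of_norm
    refine Summable.of_nonneg_of_le (fun p => norm_nonneg _) (fun p => ?_)
      (h1.mul_left (C1 * (C1 * C1)))
    rw [norm_mul, RCLike.norm_conj]
    exact mul_le_mul_of_nonneg_right (hA _) (norm_nonneg _)
  -- `T_ū (L_u u) = T_ū (D u) - T_ū (T_u T_ū u)`
  have hTbarLop : ∀ k : ℕ, Tbar v (Lop v v) k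
      = Tbar v (Dop v) k - Tbar v (Tan v (Tbar v v)) k := by
    intro k
    have h : Tbar v (Lop v v) k = ∑' p : ℕ,
        (Dop v (k + p) * (starRingEnd ℂ) (v p)
          - Tan v (Tbar v v) (k + p) * (starRingEnd ℂ) (v p)) :=
      tsum_congr fun p => sub_mul _ _ _
    rw [h, Summable.tsum_sub (S2 k) (S3 k)]
    rfl
  -- key commutation identity
  have hstep2 : ∀ k : ℕ, Tbar (dx v) v k
      = Complex.I * (k : ℂ) * Tbar v v k - Complex.I * Tbar v (Dop v) k := by
    intro k
    have hr1 : Complex.I * (k : ℂ) * Tbar v v k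
        = ∑' p : ℕ, Complex.I * (k : ℂ) * (v (k + p) * (starRingEnd ℂ) (v p)) :=
      (tsum_mul_left).symm
    have hr2 : Complex.I * Tbar v (Dop v) k
        = ∑' p : ℕ, Complex.I * (Dop v (k + p) * (starRingEnd ℂ) (v p)) :=
      (tsum_mul_left).symm
    rw [hr1, hr2, ← Summable.tsum_sub (((S0 k).mul_left _)) ((S2 k).mul_left _)]
    refine tsum_congr fun p => ?_
    simp only [dx, Dop, map_mul, Complex.conj_I, Complex.conj_natCast]
    push_cast
    ring
  -- the main finite-sum identity
  have hkey : Tan v (Tbar (dx v) v) n - Tan (dx v) (Tbar v v) n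
      + Complex.I * (n : ℂ) * Tan v (Tbar v v) n
      + Complex.I * Tan v (Tbar v (Dop v)) n
      = 2 * Complex.I * NLcoeff v n := by
    simp only [Tan, NLcoeff, Finset.mul_sum, ← Finset.sum_sub_distrib,
      ← Finset.sum_add_distrib]
    refine Finset.sum_congr rfl fun k hk => ?_
    have hkn : k ≤ n := Nat.lt_succ_iff.mp (Finset.mem_range.mp hk)
    rw [hstep2 k]
    simp only [dx, Nat.cast_sub hkn]
    ring
  -- assemble
  have hL2 : Lop v (Lop v v) n
      = (n : ℂ) * ((n : ℂ) * v n) - (n : ℂ) * Tan v (Tbar v v) n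
        - (Tan v (Tbar v (Dop v)) n - Tan v (Tbar v (Tan v (Tbar v v))) n) := by
    have h0 : Lop v (Lop v v) n = Dop (Lop v v) n - Tan v (Tbar v (Lop v v)) n := rfl
    have h1d : Dop (Lop v v) n
        = (n : ℂ) * ((n : ℂ) * v n) - (n : ℂ) * Tan v (Tbar v v) n := by
      show (n : ℂ) * ((n : ℂ) * v n - Tan v (Tbar v v) n) = _
      ring
    have h2d : Tbar v (Lop v v) = fun k =>
        Tbar v (Dop v) k - Tbar v (Tan v (Tbar v v)) k := funext hTbarLop
    have h3d : Tan v (Tbar v (Lop v v)) n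
        = Tan v (Tbar v (Dop v)) n - Tan v (Tbar v (Tan v (Tbar v v))) n := by
      rw [h2d]
      simp only [Tan, mul_sub, Finset.sum_sub_distrib]
    rw [h0, h1d, h3d]
  have hB : Bop v v n = Tan v (Tbar (dx v) v) n - Tan (dx v) (Tbar v v) n
      + Complex.I * Tan v (Tbar v (Tan v (Tbar v v))) n := rfl
  rw [hB, hL2]
  linear_combination -hkey


/-- If `u ∈ C([-T,T], H^s₊(𝕋))`, `s > 3/2`, solves
`i∂ₜu + ∂ₓ²u + 2DΠ(|u|²)u = 0`, then `∂ₜu = B_u u − i L_u² u`. -/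
theorem evolution_via_lax (s T : ℝ) (hs : 3/2 < s) (u : ℝ → ℕ → ℂ)
    (hsol : SolvesCS s T u) :
    ∀ t ∈ Set.Icc (-T) T, ∀ n : ℕ,
      HasDerivAt (fun τ => u τ n)
        (Bop (u t) (u t) n - Complex.I * Lop (u t) (Lop (u t) (u t)) n) t := by
  intro t ht n
  have hkey := memHs_weighted_l1 hs (hsol.1 t ht)
  have h1 : Summable fun p : ℕ => ‖u t p‖ := by
    refine Summable.of_nonneg_of_le (fun p => norm_nonneg _) (fun p => ?_) hkey
    have hp : (0 : ℝ) ≤ (p : ℝ) := Nat.cast_nonneg p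
    nlinarith [norm_nonneg (u t p)]
  have h1' : Summable fun p : ℕ => (p : ℝ) * ‖u t p‖ := by
    refine Summable.of_nonneg_of_le (fun p => by positivity) (fun p => ?_) hkey
    have hp : (0 : ℝ) ≤ (p : ℝ) := Nat.cast_nonneg p
    nlinarith [norm_nonneg (u t p)]
  rw [← main_identity (u t) h1 h1' n]
  exact hsol.2.2 t ht n

end
end
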